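/- For every r with 1/5 < r < 1 there exist functions h(z) = Σ_{k=0}^∞ a_k z^k and g(z) = Σ_{k=1}^∞ b_k z^k analytic on the unit disk 𝔻 with |h(z)| ≤ 1 and |g'(z)| ≤ |h'(z)| for all z ∈ 𝔻, and a point z with |z| ≤ r, such that |a_0| + Σ_{k=1}^∞ (|a_k| + |b_k|) r^k + |h(z) − a_0|² > 1. (In particular, the radius 1/5 in the preceding inequality is best possible.) -/

import Mathlib

open Metric

/-- Sharpness of the radius `1/5`: for every `1/5 < r < 1` there are `h, g` analytic on the
unit disk with `|h| ≤ 1` and `|g'| ≤ |h'|`, and a point `z` with `|z| ≤ r`, for which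
`|a₀| + ∑_{k≥1} (|aₖ| + |bₖ|) rᵏ + |h(z) - a₀|² > 1`. -/
theorem stmt7 (r : ℝ) (hr1 : 1/5 < r) (hr2 : r < 1) :
    ∃ (h g : ℂ → ℂ) (a b : ℕ → ℂ) (z : ℂ), b 0 = 0 ∧
      (∀ w ∈ ball (0:ℂ) 1, HasSum (fun k => a k * w ^ k) (h w)) ∧
      (∀ w ∈ ball (0:ℂ) 1, HasSum (fun k => b k * w ^ k) (g w)) ∧
      DifferentiableOn ℂ h (ball (0:ℂ) 1) ∧
      DifferentiableOn ℂ g (ball (0:ℂ) 1) ∧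
      (∀ w ∈ ball (0:ℂ) 1, ‖h w‖ ≤ 1) ∧
      (∀ w ∈ ball (0:ℂ) 1, ‖deriv g w‖ ≤ ‖deriv h w‖) ∧
      ‖z‖ ≤ r ∧
      1 < ‖a 0‖
        + (∑' k : ℕ, (‖a (k+1)‖ + ‖b (k+1)‖) * r ^ (k+1))
        + ‖h z - a 0‖^2 := by
  have hr0 : 0 < r := by linarith
  set t : ℝ := max 0 ((1 - 2*r)/(3*r)) with ht_def
  have ht0 : 0 ≤ t := le_max_left _ _
  have ht1 : t < 1 := by
    apply max_lt one_pos
    rw [div_lt_one (by positivity)]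
    linarith
  have hrt : 1 ≤ r * (2 + 3*t) := by
    have h1 : (1 - 2*r)/(3*r) ≤ t := le_max_right _ _
    have h2 : (1 - 2*r) ≤ 3*r*t := by
      rw [div_le_iff₀ (by positivity)] at h1
      linarith
    nlinarith
  set c : ℂ := (t : ℂ) with hc_def
  set h : ℂ → ℂ := fun w => (c + w) / (1 + c * w) with hh_def
  set g : ℂ → ℂ := fun w => h w - c with hg_def
  set a : ℕ → ℂ := fun k => if k = 0 then c else (((1 - t^2) * (-t)^(k-1) : ℝ) : ℂ) with ha_def
  set b : ℕ → ℂ := fun k => if k = 0 then 0 else a k with hb_def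
  have habs_c : ‖c‖ = t := by
    rw [hc_def, Complex.norm_real, Real.norm_eq_abs, abs_of_nonneg ht0]
  have hnz : ∀ w ∈ ball (0:ℂ) 1, 1 + c * w ≠ 0 := by
    intro w hw
    rw [mem_ball_zero_iff] at hw
    intro hzero
    have : ‖c * w‖ = 1 := by
      have : c * w = -1 := by linear_combination hzero
      rw [this]; simp
    rw [norm_mul, habs_c] at this
    have hw' : ‖w‖ < 1 := hw
    nlinarith [norm_nonneg w]
  -- series of h
  have hseries : ∀ w ∈ ball (0:ℂ) 1, HasSum (fun k => a k * w ^ k) (h w) := by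
    intro w hw
    have hwn : ‖w‖ < 1 := by rwa [mem_ball_zero_iff] at hw
    have hne := hnz w hw
    have hlt : ‖-(c * w)‖ < 1 := by
      rw [norm_neg, norm_mul]
      have : ‖c‖ = t := habs_c
      rw [this]
      nlinarith [norm_nonneg w]
    have hgeo := hasSum_geometric_of_norm_lt_one hlt
    have htail : HasSum (fun n : ℕ => ((1 - c^2) * w) * (-(c * w))^n)
        (((1 - c^2) * w) * (1 - -(c * w))⁻¹) := hgeo.mul_left _
    have htail' : HasSum (fun n : ℕ => a (n+1) * w ^ (n+1))
        (((1 - c^2) * w) * (1 - -(c * w))⁻¹) := by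
      convert htail using 2 with n
      simp only [ha_def, Nat.add_sub_cancel, if_neg (Nat.succ_ne_zero n)]
      push_cast
      ring
    rw [hasSum_nat_add_iff (f := fun k => a k * w ^ k) 1] at htail'
    convert htail' using 1
    · rfl
    have h0 : ∑ i ∈ Finset.range 1, a i * w ^ i = c := by
      simp [ha_def]
    rw [h0]
    rw [hh_def]
    rw [sub_neg_eq_add]
    field_simp
    ring
  have hgseries : ∀ w ∈ ball (0:ℂ) 1, HasSum (fun k => b k * w ^ k) (g w) := by
    intro w hw
    have hs := hseries w hw
    have hs' : HasSum (fun n : ℕ => a (n+1) * w ^ (n+1)) (h w - c) := by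
      rw [hasSum_nat_add_iff (f := fun k => a k * w ^ k) 1]
      have h0 : ∑ i ∈ Finset.range 1, a i * w ^ i = c := by simp [ha_def]
      have h1 : h w - c + c = h w := by ring
      rw [h0, h1]
      exact hs
    have hs'' : HasSum (fun n : ℕ => b (n+1) * w ^ (n+1)) (h w - c) := by
      have heq : (fun n : ℕ => b (n+1) * w ^ (n+1)) = (fun n : ℕ => a (n+1) * w ^ (n+1)) := by
        funext n; simp [hb_def]
      rw [heq]
      exact hs'
    rw [hasSum_nat_add_iff (f := fun k => b k * w ^ k) 1] at hs''
    convert hs'' using 1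
    · rfl
    simp [hb_def, hg_def]
  have hdiff : DifferentiableOn ℂ h (ball (0:ℂ) 1) := by
    apply DifferentiableOn.div
    · fun_prop
    · fun_prop
    · exact hnz
  have hgdiff : DifferentiableOn ℂ g (ball (0:ℂ) 1) := hdiff.sub_const c
  have hbound : ∀ w ∈ ball (0:ℂ) 1, ‖h w‖ ≤ 1 := by
    intro w hw
    have hwn : ‖w‖ < 1 := by rwa [mem_ball_zero_iff] at hw
    have hne := hnz w hw
    rw [hh_def]
    simp only [norm_div]
    rw [div_le_one (norm_pos_iff.mpr hne)]
    have key : Complex.normSq (c + w) ≤ Complex.normSq (1 + c * w) := by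
      have hwsq : Complex.normSq w ≤ 1 := by
        rw [← Complex.sq_norm]; nlinarith [norm_nonneg w]
      have expand : Complex.normSq (1 + c * w) - Complex.normSq (c + w)
          = (1 - t^2) * (1 - Complex.normSq w) := by
        simp [Complex.normSq_apply, Complex.add_re, Complex.add_im, Complex.mul_re,
          Complex.mul_im, hc_def, Complex.ofReal_re, Complex.ofReal_im]
        ring
      nlinarith [mul_nonneg (by nlinarith : (0:ℝ) ≤ 1 - t^2)
        (by linarith : (0:ℝ) ≤ 1 - Complex.normSq w)]
    have := Real.sqrt_le_sqrt key
    rwa [← Complex.norm_def, ← Complex.norm_def] at this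
  have hderiv : ∀ w ∈ ball (0:ℂ) 1, ‖deriv g w‖ ≤ ‖deriv h w‖ := by
    intro w _
    have : deriv g w = deriv h w := by
      rw [hg_def]
      exact deriv_sub_const c
    rw [this]
  refine ⟨h, g, a, b, (r : ℂ), by simp [hb_def], hseries, hgseries, hdiff, hgdiff, hbound,
    hderiv, by simp [Complex.norm_real, abs_of_nonneg hr0.le], ?_⟩
  -- final inequality
  have ha0 : ‖a 0‖ = t := by simp [ha_def, habs_c]
  have hu0 : 0 ≤ t * r := by positivity
  have hu1 : t * r < 1 := by nlinarith
  have hterm : ∀ k : ℕ, (‖a (k+1)‖ + ‖b (k+1)‖) * r ^ (k+1)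
      = (2 * (1 - t^2) * r) * (t*r)^k := by
    intro k
    have h1 : ‖a (k+1)‖ = (1 - t^2) * t^k := by
      simp only [ha_def, Nat.add_sub_cancel, if_neg (Nat.succ_ne_zero k)]
      rw [Complex.norm_real, Real.norm_eq_abs, abs_mul, abs_pow, abs_neg,
        abs_of_nonneg ht0, abs_of_nonneg (by nlinarith : (0:ℝ) ≤ 1 - t^2)]
    have h2 : b (k+1) = a (k+1) := by simp [hb_def]
    rw [h2, h1, mul_pow]
    ring
  have htsum : (∑' k : ℕ, (‖a (k+1)‖ + ‖b (k+1)‖) * r ^ (k+1))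
      = (2 * (1 - t^2) * r) * (1 - t*r)⁻¹ := by
    have : (fun k : ℕ => (‖a (k+1)‖ + ‖b (k+1)‖) * r ^ (k+1))
        = fun k : ℕ => (2 * (1 - t^2) * r) * (t*r)^k := funext hterm
    rw [this, tsum_mul_left, tsum_geometric_of_lt_one hu0 hu1]
  have hhz : h (r : ℂ) - a 0 = ((r * (1 - t^2) / (1 + t*r) : ℝ) : ℂ) := by
    have hne' : (1 : ℂ) + (t:ℂ) * (r:ℂ) ≠ 0 := by
      have h1 : ((1 + t*r : ℝ):ℂ) ≠ 0 := by
        exact_mod_cast (by positivity : (1+t*r:ℝ) ≠ 0)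
      push_cast at h1
      exact h1
    simp only [ha_def, if_pos rfl, hh_def, hc_def]
    push_cast
    field_simp
    ring
  have hsq : 0 < (‖h (r:ℂ) - a 0‖)^2 := by
    rw [hhz, Complex.norm_real, Real.norm_eq_abs]
    have : r * (1 - t^2) / (1 + t*r) > 0 := by
      apply div_pos (by nlinarith) (by positivity)
    positivity
  have hmain : 1 ≤ t + (2 * (1 - t^2) * r) * (1 - t*r)⁻¹ := by
    have hd : 0 < 1 - t*r := by linarith
    rw [← sub_le_iff_le_add', ← div_eq_mul_inv, le_div_iff₀ hd]
    nlinarith [mul_nonneg (by linarith : (0:ℝ) ≤ 1 - t)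
      (by linarith : (0:ℝ) ≤ r * (2 + 3*t) - 1)]
  rw [ha0, htsum]
  linarith
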